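/- Let n ≥ 1 and let f be a solution of the n×n Pulsar puzzle. If two cells lie in the same row, or in the same column, and one of them belongs to C_n while the other does not, then the value of f at the cell in C_n is strictly greater than the value of f at the cell not in C_n. -/

import Mathlib

def Circled : ℕ → ℕ × ℕ → Prop
  | 0, _ => False
  | 1, p => p = (1, 1)
  | (n + 2), (r, c) =>
      1 ≤ r ∧ r ≤ n + 2 ∧ 1 ≤ c ∧ c ≤ n + 2 ∧
        (r = 1 ∨ (2 ≤ r ∧ 2 ≤ c ∧ Circled (n + 1) (n + 2 - c + 1, r - 1)))

instance Circled.dec : ∀ (n : ℕ) (p : ℕ × ℕ), Decidable (Circled n p)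
  | 0, _ => isFalse (fun h => h)
  | 1, p => inferInstanceAs (Decidable (p = (1,1)))
  | (n+2), (r, c) =>
      letI := Circled.dec (n+1) (n + 2 - c + 1, r - 1)
      inferInstanceAs (Decidable (1 ≤ r ∧ r ≤ n + 2 ∧ 1 ≤ c ∧ c ≤ n + 2 ∧
        (r = 1 ∨ (2 ≤ r ∧ 2 ≤ c ∧ Circled (n + 1) (n + 2 - c + 1, r - 1)))))

theorem circled_bounds : ∀ (n r c : ℕ), Circled n (r, c) →
    1 ≤ r ∧ r ≤ n ∧ 1 ≤ c ∧ c ≤ n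
  | 0, _, _, h => h.elim
  | 1, r, c, h => by
      have : (r, c) = (1, 1) := h
      simp_all
  | (n+2), r, c, h => ⟨h.1, h.2.1, h.2.2.1, h.2.2.2.1⟩

theorem circled_one : ∀ (n c : ℕ), 1 ≤ c → c ≤ n → Circled n (1, c)
  | 0, c, h1, h2 => by omega
  | 1, c, h1, h2 => by
      have : c = 1 := by omega
      subst this; rfl
  | (n+2), c, h1, h2 => ⟨le_refl _, by omega, h1, h2, Or.inl rfl⟩

theorem circled_step (n r c : ℕ) (hr : 2 ≤ r) :
    Circled (n+2) (r, c) ↔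
      (r ≤ n + 2 ∧ 2 ≤ c ∧ c ≤ n + 2 ∧ Circled (n+1) (n + 2 - c + 1, r - 1)) := by
  show (1 ≤ r ∧ r ≤ n + 2 ∧ 1 ≤ c ∧ c ≤ n + 2 ∧
        (r = 1 ∨ (2 ≤ r ∧ 2 ≤ c ∧ Circled (n + 1) (n + 2 - c + 1, r - 1)))) ↔ _
  constructor
  · rintro ⟨h1, h2, h3, h4, (rfl | ⟨h5, h6, h7⟩)⟩
    · omega
    · exact ⟨h2, h6, h4, h7⟩
  · rintro ⟨h1, h2, h3, h4⟩
    exact ⟨by omega, h1, by omega, h3, Or.inr ⟨hr, h2, h4⟩⟩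

def rowset (n r : ℕ) : Finset ℕ := (Finset.Icc 1 n).filter (fun c => Circled n (r, c))
def colset (n c : ℕ) : Finset ℕ := (Finset.Icc 1 n).filter (fun r => Circled n (r, c))
def rho (n r : ℕ) : ℕ := (rowset n r).card
def kappa (n c : ℕ) : ℕ := (colset n c).card

theorem rho_one (n : ℕ) : rho n 1 = n := by
  unfold rho rowset
  rw [Finset.filter_true_of_mem, Nat.card_Icc]
  · omega
  · intro c hc
    rw [Finset.mem_Icc] at hc
    exact circled_one n c hc.1 hc.2

theorem rho_step (n r : ℕ) (hr : 2 ≤ r) (hr2 : r ≤ n + 2) :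
    rho (n+2) r = kappa (n+1) (r-1) := by
  unfold rho kappa rowset colset
  apply Finset.card_bij' (fun c _ => n + 2 - c + 1) (fun a _ => n + 2 - a + 1)
  · intro c hc
    simp only [Finset.mem_filter, Finset.mem_Icc] at hc ⊢
    rw [circled_step n r c hr] at hc
    obtain ⟨⟨h1, h2⟩, h3, h4, h5, h6⟩ := hc
    exact ⟨by omega, h6⟩
  · intro a ha
    simp only [Finset.mem_filter, Finset.mem_Icc] at ha ⊢
    obtain ⟨⟨h1, h2⟩, h3⟩ := ha
    refine ⟨by omega, ?_⟩
    rw [circled_step n r _ hr]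
    refine ⟨hr2, by omega, by omega, ?_⟩
    have : n + 2 - (n + 2 - a + 1) + 1 = a := by omega
    rw [this]; exact h3
  · intro c hc
    simp only [Finset.mem_filter, Finset.mem_Icc] at hc
    rw [circled_step n r c hr] at hc
    omega
  · intro a ha
    simp only [Finset.mem_filter, Finset.mem_Icc] at ha
    omega

theorem kappa_one (n : ℕ) : kappa (n+2) 1 = 1 := by
  unfold kappa colset
  have : (Finset.Icc 1 (n+2)).filter (fun r => Circled (n+2) (r, 1)) = {1} := by
    ext r
    simp only [Finset.mem_filter, Finset.mem_Icc, Finset.mem_singleton]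
    constructor
    · rintro ⟨⟨h1, h2⟩, h3⟩
      rcases h3.2.2.2.2 with h | h
      · exact h
      · omega
    · rintro rfl
      exact ⟨⟨le_refl _, by omega⟩, circled_one (n+2) 1 (le_refl _) (by omega)⟩
  rw [this, Finset.card_singleton]

theorem kappa_step (n c : ℕ) (hc : 2 ≤ c) (hc2 : c ≤ n + 2) :
    kappa (n+2) c = 1 + rho (n+1) (n + 2 - c + 1) := by
  unfold kappa rho colset rowset
  have : (Finset.Icc 1 (n+2)).filter (fun r => Circled (n+2) (r, c)) =
      insert 1 (((Finset.Icc 1 (n+1)).filter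
        (fun c' => Circled (n+1) (n + 2 - c + 1, c'))).image (· + 1)) := by
    ext r
    simp only [Finset.mem_filter, Finset.mem_Icc, Finset.mem_insert, Finset.mem_image]
    constructor
    · rintro ⟨⟨h1, h2⟩, h3⟩
      rcases Nat.lt_or_ge r 2 with h | h
      · left; omega
      · right
        rw [circled_step n r c h] at h3
        exact ⟨r - 1, by
          have hb := circled_bounds (n+1) _ _ h3.2.2.2
          exact ⟨⟨by omega, by omega⟩, h3.2.2.2⟩, by omega⟩
    · rintro (rfl | ⟨a, ⟨⟨ha1, ha2⟩, ha3⟩, rfl⟩)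
      · exact ⟨⟨le_refl _, by omega⟩, circled_one (n+2) c (by omega) hc2⟩
      · refine ⟨⟨by omega, by omega⟩, ?_⟩
        rw [circled_step n (a+1) c (by omega)]
        exact ⟨by omega, hc, hc2, by rw [Nat.add_sub_cancel]; exact ha3⟩
  have hnot : (1:ℕ) ∉ ((Finset.Icc 1 (n+1)).filter
      (fun c' => Circled (n+1) (n + 2 - c + 1, c'))).image (· + 1) := by
    simp only [Finset.mem_image, Finset.mem_filter, Finset.mem_Icc]
    rintro ⟨a, ⟨⟨h1, _⟩, _⟩, h2⟩
    omega
  rw [this, Finset.card_insert_of_notMem hnot, Finset.card_image_of_injective _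
    (add_left_injective 1), Nat.add_comm]

theorem transport : ∀ n : ℕ, 1 ≤ n →
    (∀ g : ℕ → ℕ, ∑ r ∈ Finset.Icc 1 n, g (rho n r) = ∑ k ∈ Finset.Icc 1 n, g k) ∧
    (∀ g : ℕ → ℕ, ∑ c ∈ Finset.Icc 1 n, g (kappa n c) = ∑ k ∈ Finset.Icc 1 n, g k)
  | 0, h => absurd h (by omega)
  | 1, _ => by
      have h1 : rho 1 1 = 1 := by decide
      have h2 : kappa 1 1 = 1 := by decide
      constructor <;> intro g <;> simp [Finset.Icc_self, h1, h2]
  | (n+2), _ => by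
      obtain ⟨IHr, IHk⟩ := transport (n+1) (by omega)
      have hsplit : Finset.Icc 1 (n+2) = insert 1 (Finset.Icc 2 (n+2)) := by
        ext x; simp only [Finset.mem_Icc, Finset.mem_insert]; omega
      have hone : (1:ℕ) ∉ Finset.Icc 2 (n+2) := by simp
      have hshift : Finset.Icc 2 (n+2) =
          (Finset.Icc 1 (n+1)).image (· + 1) := by
        ext x; simp only [Finset.mem_Icc, Finset.mem_image]
        constructor
        · intro h; exact ⟨x - 1, by omega, by omega⟩
        · rintro ⟨a, ha, rfl⟩; omega
      have hinj : Set.InjOn (· + 1) (Finset.Icc 1 (n+1) : Set ℕ) :=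
        (add_left_injective 1).injOn
      have htop : ∀ g : ℕ → ℕ, ∑ k ∈ Finset.Icc 1 (n+2), g k
          = ∑ k ∈ Finset.Icc 1 (n+1), g k + g (n+2) :=
        fun g => Finset.sum_Icc_succ_top (by omega) g
      have hbot : ∀ g : ℕ → ℕ, ∑ k ∈ Finset.Icc 1 (n+2), g k
          = g 1 + ∑ k ∈ Finset.Icc 2 (n+2), g k := by
        intro g; rw [hsplit, Finset.sum_insert hone]
      constructor
      · intro g
        rw [hsplit, Finset.sum_insert hone, rho_one]
        have h2 : ∑ r ∈ Finset.Icc 2 (n+2), g (rho (n+2) r)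
            = ∑ r ∈ Finset.Icc 1 (n+1), g (kappa (n+1) r) := by
          rw [hshift, Finset.sum_image hinj]
          refine Finset.sum_congr rfl fun r hr => ?_
          rw [Finset.mem_Icc] at hr
          rw [rho_step n (r+1) (by omega) (by omega), Nat.add_sub_cancel]
        rw [h2, IHk g, ← hsplit, htop g, Nat.add_comm]
      · intro g
        rw [hbot fun c => g (kappa (n+2) c), kappa_one]
        have h2 : ∑ c ∈ Finset.Icc 2 (n+2), g (kappa (n+2) c)
            = ∑ a ∈ Finset.Icc 1 (n+1), g (1 + rho (n+1) a) := by
          apply Finset.sum_nbij' (fun c => n + 2 - c + 1) (fun a => n + 2 - a + 1)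
          · intro c hc; rw [Finset.mem_Icc] at hc ⊢; omega
          · intro a ha; rw [Finset.mem_Icc] at ha ⊢; omega
          · intro c hc; rw [Finset.mem_Icc] at hc; omega
          · intro a ha; rw [Finset.mem_Icc] at ha; omega
          · intro c hc; rw [Finset.mem_Icc] at hc
            rw [kappa_step n c hc.1 hc.2]
        rw [h2, IHr fun k => g (1 + k), hbot g]
        congr 1
        rw [hshift, Finset.sum_image hinj]
        refine Finset.sum_congr rfl fun r hr => ?_
        rw [Nat.add_comm]

theorem sum_min (n : ℕ) : ∀ m, m ≤ n →
    ∑ k ∈ Finset.Icc 1 n, min k m = ∑ v ∈ Finset.Icc (n+1-m) n, v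
  | 0, _ => by simp
  | (m+1), h => by
      have IH := sum_min n m (by omega)
      have hpt : ∀ k ∈ Finset.Icc 1 n,
          min k (m+1) = min k m + (if m+1 ≤ k then 1 else 0) := by
        intro k hk; rw [Finset.mem_Icc] at hk; split <;> omega
      have hflt : (Finset.Icc 1 n).filter (fun k => m+1 ≤ k) = Finset.Icc (m+1) n := by
        ext k; simp only [Finset.mem_filter, Finset.mem_Icc]; omega
      have hcard : ∑ k ∈ Finset.Icc 1 n, (if m+1 ≤ k then 1 else 0) = n - m := by
        rw [← Finset.card_filter, hflt, Nat.card_Icc]; omega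
      have hins : Finset.Icc (n+1-(m+1)) n = insert (n-m) (Finset.Icc (n+1-m) n) := by
        ext k; simp only [Finset.mem_Icc, Finset.mem_insert]; omega
      have hnm : n - m ∉ Finset.Icc (n+1-m) n := by
        rw [Finset.mem_Icc]; omega
      rw [Finset.sum_congr rfl hpt, Finset.sum_add_distrib, IH, hcard, hins,
        Finset.sum_insert hnm, Nat.add_comm]

theorem pulsar_core (n : ℕ) (f : ℕ × ℕ → ℕ) (cells : ℕ → ℕ → ℕ × ℕ)
    (hcover : ∀ p : ℕ × ℕ, Circled n p →
      ∃ i j, 1 ≤ i ∧ i ≤ n ∧ 1 ≤ j ∧ j ≤ n ∧ cells i j = p)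
    (hinj : ∀ i j i' j', 1 ≤ i → i ≤ n → 1 ≤ j → j ≤ n → 1 ≤ i' → i' ≤ n →
      1 ≤ j' → j' ≤ n → cells i j = cells i' j' → i = i' ∧ j = j')
    (hval : ∀ i j, 1 ≤ i → i ≤ n → 1 ≤ j → j ≤ n →
      1 ≤ f (cells i j) ∧ f (cells i j) ≤ n)
    (hlatin : ∀ i j j', 1 ≤ i → i ≤ n → 1 ≤ j → j ≤ n → 1 ≤ j' → j' ≤ n →
      j ≠ j' → f (cells i j) ≠ f (cells i j'))
    (hperm : ∀ g : ℕ → ℕ,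
      ∑ i ∈ Finset.Icc 1 n,
        g (((Finset.Icc 1 n).filter (fun j => Circled n (cells i j))).card) =
      ∑ k ∈ Finset.Icc 1 n, g k)
    (hpuz : ∀ p, Circled n p → f p = Set.ncard {q : ℕ × ℕ | Circled n q ∧ f q = f p}) :
    ∀ i j j', 1 ≤ i → i ≤ n → 1 ≤ j → j ≤ n → 1 ≤ j' → j' ≤ n →
      Circled n (cells i j) → ¬ Circled n (cells i j') →
      f (cells i j') < f (cells i j) := by
  classical
  set I := Finset.Icc 1 n with hI
  set D : Finset (ℕ × ℕ) := (I ×ˢ I).filter (fun q => Circled n (cells q.1 q.2)) with hD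
  set ls : ℕ → Finset ℕ := fun i => I.filter (fun j => Circled n (cells i j)) with hls
  have hmemI : ∀ x, x ∈ I ↔ 1 ≤ x ∧ x ≤ n := by intro x; rw [hI, Finset.mem_Icc]
  have hmemD : ∀ q : ℕ × ℕ, q ∈ D ↔
      (1 ≤ q.1 ∧ q.1 ≤ n ∧ 1 ≤ q.2 ∧ q.2 ≤ n ∧ Circled n (cells q.1 q.2)) := by
    intro q
    rw [hD, Finset.mem_filter, Finset.mem_product, hmemI, hmemI]
    tauto
  have hmemls : ∀ i j, j ∈ ls i ↔ (1 ≤ j ∧ j ≤ n ∧ Circled n (cells i j)) := by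
    intro i j
    rw [hls]
    simp only [Finset.mem_filter, hmemI]
    tauto
  -- Step A: ncard of value classes as finset cards
  set N : ℕ → ℕ := fun v => (D.filter (fun q => f (cells q.1 q.2) = v)).card with hN
  have hNdef : ∀ v, N v = (D.filter (fun q => f (cells q.1 q.2) = v)).card := fun v => rfl
  have hncard : ∀ v, Set.ncard {q : ℕ × ℕ | Circled n q ∧ f q = v} = N v := by
    intro v
    have hset : {q : ℕ × ℕ | Circled n q ∧ f q = v} =
        (fun q : ℕ × ℕ => cells q.1 q.2) ''
          ↑(D.filter (fun q => f (cells q.1 q.2) = v)) := by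
      ext p
      simp only [Set.mem_setOf_eq, Set.mem_image, Finset.coe_filter, Set.mem_setOf_eq,
        Finset.mem_coe]
      constructor
      · rintro ⟨hcirc, hfv⟩
        obtain ⟨i, j, h1, h2, h3, h4, h5⟩ := hcover p hcirc
        refine ⟨(i, j), ⟨?_, ?_⟩, h5⟩
        · rw [hmemD]; exact ⟨h1, h2, h3, h4, by rw [h5]; exact hcirc⟩
        · rw [h5]; exact hfv
      · rintro ⟨⟨i, j⟩, ⟨hq, hfv⟩, rfl⟩
        rw [hmemD] at hq
        exact ⟨hq.2.2.2.2, hfv⟩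
    rw [hset, Set.ncard_image_of_injOn, Set.ncard_coe_finset]
    intro q hq q' hq' he
    simp only [Finset.coe_filter, Set.mem_setOf_eq] at hq hq'
    rw [hmemD] at hq hq'
    obtain ⟨h1, h2⟩ := hinj q.1 q.2 q'.1 q'.2 hq.1.1 hq.1.2.1 hq.1.2.2.1 hq.1.2.2.2.1
      hq'.1.1 hq'.1.2.1 hq'.1.2.2.1 hq'.1.2.2.2.1 he
    exact Prod.ext h1 h2
  -- Step C: fiberwise decomposition by line
  have hfiber : ∀ (P : ℕ → Prop) [DecidablePred P],
      (D.filter (fun q => P (f (cells q.1 q.2)))).card =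
      ∑ i ∈ I, ((ls i).filter (fun j => P (f (cells i j)))).card := by
    intro P _
    rw [Finset.card_eq_sum_card_fiberwise (f := Prod.fst) (t := I)
      (fun q hq => by rw [Finset.mem_coe, Finset.mem_filter, hmemD] at hq; rw [Finset.mem_coe, hmemI]; exact ⟨hq.1.1, hq.1.2.1⟩)]
    refine Finset.sum_congr rfl fun i hi => ?_
    rw [hmemI] at hi
    have himg : (D.filter (fun q => P (f (cells q.1 q.2)))).filter (fun q => q.1 = i)
        = ((ls i).filter (fun j => P (f (cells i j)))).image (fun j => (i, j)) := by
      ext ⟨a, b⟩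
      simp only [Finset.mem_filter, Finset.mem_image, hmemD, hmemls, Prod.mk.injEq]
      constructor
      · rintro ⟨⟨⟨h1, h2, h3, h4, h5⟩, h6⟩, rfl⟩
        exact ⟨b, ⟨⟨h3, h4, h5⟩, h6⟩, rfl, rfl⟩
      · rintro ⟨j, ⟨⟨hj1, hj2, hj3⟩, hjP⟩, rfl, rfl⟩
        exact ⟨⟨⟨hi.1, hi.2, hj1, hj2, hj3⟩, hjP⟩, rfl⟩
    rw [himg, Finset.card_image_of_injective _ (fun x y h => congrArg Prod.snd h)]
  -- Step D: each value v in [1,n] occurs exactly v times on circled cells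
  have hNeq : ∀ v ∈ I, N v = v := by
    have htot : ∑ v ∈ I, N v = ∑ v ∈ I, v := by
      have h1 : ∑ v ∈ I, N v = D.card := by
        rw [Finset.card_eq_sum_card_fiberwise (f := fun q => f (cells q.1 q.2)) (t := I)
          (fun q hq => by
            rw [Finset.mem_coe, hmemD] at hq
            rw [Finset.mem_coe, hmemI]
            exact hval q.1 q.2 hq.1 hq.2.1 hq.2.2.1 hq.2.2.2.1)]
      have h2 : D.card = ∑ i ∈ I, (ls i).card := by
        have := hfiber (fun _ => True)
        simpa using this
      rw [h1, h2]
      exact hperm id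
    have hle : ∀ v ∈ I, N v ≤ v := by
      intro v hv
      rcases Nat.eq_zero_or_pos (N v) with h | h
      · omega
      · rw [hNdef v] at h
        obtain ⟨q, hq⟩ := Finset.card_pos.mp h
        rw [Finset.mem_filter, hmemD] at hq
        have := hpuz (cells q.1 q.2) hq.1.2.2.2.2
        rw [hncard, hq.2] at this
        omega
    intro v hv
    exact (Finset.sum_eq_sum_iff_of_le hle).mp htot v hv
  -- Step E: block counts saturate
  have key : ∀ w, 1 ≤ w → w ≤ n + 1 → ∀ i ∈ I,
      ((ls i).filter (fun j => w ≤ f (cells i j))).card = min (ls i).card (n + 1 - w) := by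
    intro w hw1 hw2
    have hsum1 : ∑ i ∈ I, ((ls i).filter (fun j => w ≤ f (cells i j))).card =
        ∑ v ∈ Finset.Icc w n, v := by
      rw [← hfiber (fun v => w ≤ v)]
      rw [Finset.card_eq_sum_card_fiberwise (f := fun q => f (cells q.1 q.2))
        (t := Finset.Icc w n) (fun q hq => by
          rw [Finset.mem_coe, Finset.mem_filter, hmemD] at hq
          rw [Finset.mem_coe, Finset.mem_Icc]
          exact ⟨hq.2, (hval q.1 q.2 hq.1.1 hq.1.2.1 hq.1.2.2.1 hq.1.2.2.2.1).2⟩)]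
      refine Finset.sum_congr rfl fun v hv => ?_
      rw [Finset.mem_Icc] at hv
      have heq : (D.filter (fun q => w ≤ f (cells q.1 q.2))).filter
          (fun q => f (cells q.1 q.2) = v) = D.filter (fun q => f (cells q.1 q.2) = v) := by
        rw [Finset.filter_filter]
        refine Finset.filter_congr fun q hq => ?_
        constructor
        · rintro ⟨_, h⟩; exact h
        · intro h; exact ⟨by omega, h⟩
      rw [heq, ← hNdef v]
      exact hNeq v (by rw [hmemI]; omega)
    have hsum2 : ∑ i ∈ I, min (ls i).card (n + 1 - w) = ∑ v ∈ Finset.Icc w n, v := by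
      rw [hperm (fun k => min k (n + 1 - w)), sum_min n (n + 1 - w) (by omega)]
      congr 2
      omega
    have hle : ∀ i ∈ I, ((ls i).filter (fun j => w ≤ f (cells i j))).card ≤
        min (ls i).card (n + 1 - w) := by
      intro i hi
      rw [hmemI] at hi
      refine le_min (Finset.card_filter_le _ _) ?_
      have : n + 1 - w = (Finset.Icc w n).card := by rw [Nat.card_Icc]
      rw [this]
      apply Finset.card_le_card_of_injOn (fun j => f (cells i j))
      · intro j hj
        rw [Finset.mem_coe, Finset.mem_filter, hmemls] at hj
        rw [Finset.mem_coe, Finset.mem_Icc]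
        exact ⟨hj.2, (hval i j hi.1 hi.2 hj.1.1 hj.1.2.1).2⟩
      · intro j hj j' hj' he
        rw [Finset.mem_coe, Finset.mem_filter, hmemls] at hj hj'
        by_contra hne
        exact hlatin i j j' hi.1 hi.2 hj.1.1 hj.1.2.1 hj'.1.1 hj'.1.2.1 hne he
    exact fun i hi => (Finset.sum_eq_sum_iff_of_le hle).mp (hsum1.trans hsum2.symm) i hi
  -- Step F: conclusion
  intro i j j' hi1 hi2 hj1 hj2 hj'1 hj'2 hc hnc
  set v := f (cells i j) with hv
  set w := f (cells i j') with hw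
  have hjj' : j ≠ j' := fun h => hnc (h ▸ hc)
  have hvw : v ≠ w := hlatin i j j' hi1 hi2 hj1 hj2 hj'1 hj'2 hjj'
  by_contra hlt
  push_neg at hlt
  have hvb := hval i j hi1 hi2 hj1 hj2
  have hwb := hval i j' hi1 hi2 hj'1 hj'2
  have hvltw : v < w := by omega
  have hiI : i ∈ I := by rw [hmemI]; exact ⟨hi1, hi2⟩
  have hjls : j ∈ ls i := by rw [hmemls]; exact ⟨hj1, hj2, hc⟩
  have hkw := key w (by omega) (by omega) i hiI
  rcases le_or_gt (ls i).card (n + 1 - w) with hcase | hcase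
  · rw [min_eq_left hcase] at hkw
    have hfull : (ls i).filter (fun j => w ≤ f (cells i j)) = ls i :=
      Finset.eq_of_subset_of_card_le (Finset.filter_subset _ _) (le_of_eq hkw.symm)
    have : j ∈ (ls i).filter (fun j => w ≤ f (cells i j)) := hfull.symm ▸ hjls
    rw [Finset.mem_filter] at this
    omega
  · rw [min_eq_right (by omega)] at hkw
    have hkw1 := key (w + 1) (by omega) (by omega) i hiI
    rw [min_eq_right (by omega)] at hkw1
    set s := (ls i).filter (fun j => w ≤ f (cells i j)) with hs
    have hsplit := Finset.card_filter_add_card_filter_not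
      (s := s) (p := fun j => f (cells i j) = w)
    have hne : s.filter (fun j => ¬ f (cells i j) = w) =
        (ls i).filter (fun j => w + 1 ≤ f (cells i j)) := by
      rw [hs, Finset.filter_filter]
      refine Finset.filter_congr fun q hq => ?_
      constructor
      · rintro ⟨h1, h2⟩; omega
      · intro h; constructor <;> omega
    rw [hne, hkw1, hkw] at hsplit
    have hpos : 0 < (s.filter (fun j => f (cells i j) = w)).card := by omega
    rw [Finset.card_pos] at hpos
    obtain ⟨j'', hj''⟩ := hpos
    rw [Finset.mem_filter, hs, Finset.mem_filter, hmemls] at hj''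
    have hne' : j'' ≠ j' := fun h => hnc (h ▸ hj''.1.1.2.2)
    exact hlatin i j'' j' hi1 hi2 hj''.1.1.1 hj''.1.1.2.1 hj'1 hj'2 hne'
      (by rw [hj''.2, ← hw])

def IsLatinSquare (n : ℕ) (f : ℕ × ℕ → ℕ) : Prop :=
  (∀ r c, 1 ≤ r → r ≤ n → 1 ≤ c → c ≤ n → 1 ≤ f (r, c) ∧ f (r, c) ≤ n) ∧
  (∀ r c₁ c₂, 1 ≤ r → r ≤ n → 1 ≤ c₁ → c₁ ≤ n → 1 ≤ c₂ → c₂ ≤ n → c₁ ≠ c₂ →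
    f (r, c₁) ≠ f (r, c₂)) ∧
  (∀ r₁ r₂ c, 1 ≤ r₁ → r₁ ≤ n → 1 ≤ r₂ → r₂ ≤ n → 1 ≤ c → c ≤ n → r₁ ≠ r₂ →
    f (r₁, c) ≠ f (r₂, c))

def IsPulsarSolution (n : ℕ) (f : ℕ × ℕ → ℕ) : Prop :=
  IsLatinSquare n f ∧
    ∀ p, Circled n p → f p = Set.ncard {q : ℕ × ℕ | Circled n q ∧ f q = f p}

theorem pulsar_circled_gt_uncircled (n : ℕ) (hn : 1 ≤ n) (f : ℕ × ℕ → ℕ)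
    (hf : IsPulsarSolution n f) :
    (∀ r c c', 1 ≤ r → r ≤ n → 1 ≤ c → c ≤ n → 1 ≤ c' → c' ≤ n →
      Circled n (r, c) → ¬ Circled n (r, c') → f (r, c') < f (r, c)) ∧
    (∀ r r' c, 1 ≤ r → r ≤ n → 1 ≤ r' → r' ≤ n → 1 ≤ c → c ≤ n →
      Circled n (r, c) → ¬ Circled n (r', c) → f (r', c) < f (r, c)) := by
  obtain ⟨⟨hval, hrow, hcol⟩, hpuz⟩ := hf
  obtain ⟨hTr, hTk⟩ := transport n hn
  constructor
  · intro r c c' h1 h2 h3 h4 h5 h6 hc hnc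
    exact pulsar_core n f (fun i j => (i, j))
      (fun p hp => by
        obtain ⟨hb1, hb2, hb3, hb4⟩ := circled_bounds n p.1 p.2 hp
        exact ⟨p.1, p.2, hb1, hb2, hb3, hb4, rfl⟩)
      (fun i j i' j' _ _ _ _ _ _ _ _ h =>
        ⟨congrArg Prod.fst h, congrArg Prod.snd h⟩)
      (fun i j a b cc d => hval i j a b cc d)
      (fun i j j' a b cc d e g hne => hrow i j j' a b cc d e g hne)
      (fun g => hTr g)
      hpuz r c c' h1 h2 h3 h4 h5 h6 hc hnc
  · intro r r' c h1 h2 h3 h4 h5 h6 hc hnc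
    exact pulsar_core n f (fun i j => (j, i))
      (fun p hp => by
        obtain ⟨hb1, hb2, hb3, hb4⟩ := circled_bounds n p.1 p.2 hp
        exact ⟨p.2, p.1, hb3, hb4, hb1, hb2, rfl⟩)
      (fun i j i' j' _ _ _ _ _ _ _ _ h =>
        ⟨congrArg Prod.snd h, congrArg Prod.fst h⟩)
      (fun i j a b cc d => hval j i cc d a b)
      (fun i j j' hi1 hi2 hj1 hj2 hj'1 hj'2 hne =>
        hcol j j' i hj1 hj2 hj'1 hj'2 hi1 hi2 hne)
      (fun g => hTk g)
      hpuz c r r' h5 h6 h1 h2 h3 h4 hc hnc
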